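/- arXiv:1910.00926 — 2 statements merged into one kernel-verified Lean document; each statement's English description precedes it below -/
import Mathlib

section
/- Let X be a Polish space and A ⊆ X a Δ⁰₂ set. Define transfinite sequences of sets F_η, H_η ⊆ X by recursion: F_0 = X, H_η = closure(F_η \ A), F_{η+1} = H_η ∩ closure(F_η ∩ A), and F_λ = ⋂_{η<λ} F_η for limit ordinals λ. Then there exists a countable ordinal θ < ω₁ such that F_θ = ∅, and for this θ one has A = ⋃_{η<θ} (F_η \ H_η). Moreover F_0 ⊇ H_0 ⊇ F_1 ⊇ H_1 ⊇ ⋯ ⊇ F_η ⊇ H_η ⊇ ⋯ is a decreasing sequence of closed sets. -/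
open Set

private lemma isGδ_preimage {X Y : Type*} [TopologicalSpace X] [TopologicalSpace Y]
    {s : Set Y} (hs : IsGδ s) {f : X → Y} (hf : Continuous f) : IsGδ (f ⁻¹' s) := by
  obtain ⟨T, hTo, hTc, rfl⟩ := hs
  rw [sInter_eq_biInter, preimage_iInter₂]
  exact IsGδ.biInter hTc fun t ht => ((hTo t ht).preimage hf).isGδ

/-- Difference-hierarchy representation of a Δ⁰₂ set `A` in a Polish space: for the
transfinite sequences `F 0 = univ`, `H η = closure (F η \ A)`,
`F (η+1) = H η ∩ closure (F η ∩ A)`, `F λ = ⋂_{η<λ} F η` at limits, there is a countable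
ordinal `θ` with `F θ = ∅` and `A = ⋃_{η<θ} (F η \ H η)`; moreover the `F η`, `H η` form a
decreasing sequence of closed sets. -/
theorem delta02_difference_hierarchy
    {X : Type*} [TopologicalSpace X] [PolishSpace X]
    (A : Set X) (hAGδ : IsGδ A) (hAFσ : IsGδ Aᶜ)
    (F H : Ordinal.{0} → Set X)
    (hF0 : F 0 = Set.univ)
    (hH : ∀ η, H η = closure (F η \ A))
    (hFsucc : ∀ η, F (η + 1) = H η ∩ closure (F η ∩ A))
    (hFlim : ∀ lam : Ordinal, Order.IsSuccLimit lam → F lam = ⋂ η < lam, F η) :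
    (∃ θ : Ordinal, θ < (Cardinal.aleph 1).ord ∧ F θ = ∅ ∧
        A = ⋃ η < θ, (F η \ H η)) ∧
      (∀ η, IsClosed (F η) ∧ IsClosed (H η)) ∧
      (∀ η, H η ⊆ F η ∧ F (η + 1) ⊆ H η) ∧
      (∀ η ξ : Ordinal, η ≤ ξ → F ξ ⊆ F η) := by
  have hHclosed : ∀ η, IsClosed (H η) := fun η => (hH η) ▸ isClosed_closure
  have hFclosed : ∀ η, IsClosed (F η) := by
    intro η
    induction η using Ordinal.induction with
    | h η ih =>
      rcases Ordinal.zero_or_succ_or_isSuccLimit η with h0 | ⟨a, ha⟩ | hl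
      · rw [h0, hF0]; exact isClosed_univ
      · rw [← ha, ← Ordinal.add_one_eq_succ, hFsucc]
        exact (hHclosed a).inter isClosed_closure
      · rw [hFlim η hl]
        exact isClosed_biInter fun i hi => ih i hi
  have hHsubF : ∀ η, H η ⊆ F η := by
    intro η
    rw [hH η]
    exact (hFclosed η).closure_subset_iff.mpr diff_subset
  have hFsuccH : ∀ η, F (η + 1) ⊆ H η := fun η => (hFsucc η) ▸ inter_subset_left
  have step : ∀ η, F (η + 1) ⊆ F η := fun η => (hFsuccH η).trans (hHsubF η)
  have hmono : ∀ ξ η : Ordinal, η ≤ ξ → F ξ ⊆ F η := by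
    intro ξ
    induction ξ using Ordinal.induction with
    | h ξ ih =>
      intro η hη
      rcases eq_or_lt_of_le hη with h | h
      · rw [h]
      rcases Ordinal.zero_or_succ_or_isSuccLimit ξ with h0 | ⟨a, ha⟩ | hl
      · exact absurd (h0 ▸ h) (not_lt_of_ge (zero_le (a := η)))
      · subst ha
        have hηa : η ≤ a := Order.lt_succ_iff.mp h
        have hs : F (Order.succ a) ⊆ F a := by
          rw [← Ordinal.add_one_eq_succ]; exact step a
        exact hs.trans (ih a (Order.lt_succ a) η hηa)
      · rw [hFlim ξ hl]; exact biInter_subset_of_mem h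
  -- Baire category argument: a fixed point of the derivation is empty
  have baire : ∀ θ : Ordinal, F (θ + 1) = F θ → F θ = ∅ := by
    intro θ hst
    by_contra hne
    rw [← Ne, ← nonempty_iff_ne_empty] at hne
    have hCclosed : IsClosed (F θ) := hFclosed θ
    have h2 : F θ ⊆ closure (F θ ∩ A) := by
      intro x hx
      have hx' : x ∈ F (θ + 1) := hst.symm ▸ hx
      rw [hFsucc] at hx'
      exact hx'.2
    have h1 : F θ ⊆ closure (F θ \ A) := by
      intro x hx
      have hx' : x ∈ F (θ + 1) := hst.symm ▸ hx
      rw [hFsucc, hH] at hx'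
      exact hx'.1
    haveI : PolishSpace (F θ) := hCclosed.polishSpace
    letI := TopologicalSpace.upgradeIsCompletelyMetrizable (F θ)
    haveI : Nonempty (F θ) := hne.to_subtype
    have hcont : Continuous (Subtype.val : F θ → X) := continuous_subtype_val
    have hGδ1 : IsGδ (Subtype.val ⁻¹' A : Set (F θ)) := isGδ_preimage hAGδ hcont
    have hGδ2 : IsGδ (Subtype.val ⁻¹' Aᶜ : Set (F θ)) := isGδ_preimage hAFσ hcont
    have hd1 : Dense (Subtype.val ⁻¹' A : Set (F θ)) := by
      intro x
      rw [closure_subtype, Subtype.image_preimage_coe]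
      exact h2 x.2
    have hd2 : Dense (Subtype.val ⁻¹' Aᶜ : Set (F θ)) := by
      intro x
      rw [closure_subtype, Subtype.image_preimage_coe, ← diff_eq]
      exact h1 x.2
    have hdense := hd1.inter_of_Gδ hGδ1 hGδ2 hd2
    obtain ⟨y, hy1, hy2⟩ := hdense.nonempty
    exact hy2 hy1
  -- there is a countable ordinal where F is empty
  obtain ⟨b, hbcount, -, hbasis⟩ := TopologicalSpace.exists_countable_basis X
  have exists_empty : ∃ θ : Ordinal, θ < (Cardinal.aleph 1).ord ∧ F θ = ∅ := by
    by_contra hcon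
    push_neg at hcon
    have choice : ∀ θ : Iio ((Cardinal.aleph 1).ord),
        ∃ U : b, ((U : Set X) ∩ F θ).Nonempty ∧ (U : Set X) ∩ F ((θ : Ordinal) + 1) = ∅ := by
      rintro ⟨θ, hθ⟩
      have hne := hcon θ hθ
      have hssub : F (θ + 1) ⊂ F θ := by
        refine ⟨step θ, fun hsub => ?_⟩
        exact absurd (baire θ (subset_antisymm (step θ) hsub))
          (nonempty_iff_ne_empty.mp hne)
      obtain ⟨x, hxθ, hx1⟩ := exists_of_ssubset hssub
      obtain ⟨U, hUb, hxU, hUsub⟩ :=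
        hbasis.exists_subset_of_mem_open (show x ∈ (F (θ + 1))ᶜ from hx1)
          (hFclosed (θ + 1)).isOpen_compl
      exact ⟨⟨U, hUb⟩, ⟨x, hxU, hxθ⟩, by
        rw [eq_empty_iff_forall_notMem]
        exact fun y ⟨hyU, hyF⟩ => hUsub hyU hyF⟩
    choose f hf1 hf2 using choice
    have key : ∀ θ ξ : Iio ((Cardinal.aleph 1).ord), (θ : Ordinal) < (ξ : Ordinal) →
        f θ ≠ f ξ := by
      intro θ ξ hlt hfe
      obtain ⟨y, hyU, hyF⟩ := hf1 ξ
      have hmem : y ∈ ((f θ : Set X)) ∩ F ((θ : Ordinal) + 1) := by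
        refine ⟨by rw [hfe]; exact hyU, hmono ξ _ ?_ hyF⟩
        rwa [Ordinal.add_one_eq_succ, Order.succ_le_iff]
      rw [hf2 θ] at hmem
      exact hmem
    have hinj : Function.Injective f := by
      intro θ ξ h
      rcases lt_trichotomy (θ : Ordinal) (ξ : Ordinal) with hlt | heq | hgt
      · exact absurd h (key θ ξ hlt)
      · exact Subtype.ext heq
      · exact absurd h.symm (key ξ θ hgt)
    haveI : Countable b := hbcount.to_subtype
    haveI : Countable (Iio ((Cardinal.aleph 1).ord)) := hinj.countable
    have h2 : Cardinal.mk (Iio ((Cardinal.aleph 1).ord)) ≤ Cardinal.aleph0 :=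
      Cardinal.mk_le_aleph0
    rw [Ordinal.mk_Iio_ordinal, Cardinal.card_ord, ← Cardinal.lift_aleph0.{1, 0}] at h2
    exact absurd (Cardinal.lift_le.mp h2) (not_le.mpr Cardinal.aleph0_lt_aleph_one)
  obtain ⟨θ, hθlt, hθempty⟩ := exists_empty
  refine ⟨⟨θ, hθlt, hθempty, ?_⟩, fun η => ⟨hFclosed η, hHclosed η⟩,
    fun η => ⟨hHsubF η, hFsuccH η⟩, fun η ξ h => hmono ξ η h⟩
  ext x
  simp only [mem_iUnion, exists_prop]
  constructor
  · intro hxA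
    have hsne : {η : Ordinal | x ∉ F η}.Nonempty :=
      ⟨θ, by rw [mem_setOf_eq, hθempty]; exact notMem_empty x⟩
    set η₀ := Ordinal.lt_wf.min _ hsne with hη₀def
    have hη₀mem : x ∉ F η₀ := Ordinal.lt_wf.min_mem _ hsne
    have hη₀min : ∀ ξ < η₀, x ∈ F ξ := by
      intro ξ hξ
      by_contra hc
      exact Ordinal.lt_wf.not_lt_min _ hc hξ
    rcases Ordinal.zero_or_succ_or_isSuccLimit η₀ with h0 | ⟨a, ha⟩ | hl
    · exact absurd (by rw [hF0]; exact mem_univ x : x ∈ F 0) (h0 ▸ hη₀mem)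
    · have hxa : x ∈ F a := hη₀min a (ha ▸ Order.lt_succ a)
      have hxnot : x ∉ F (a + 1) := by rwa [Ordinal.add_one_eq_succ, ha]
      have hxH : x ∉ H a := by
        intro hxH
        exact hxnot ((hFsucc a).symm ▸ ⟨hxH, subset_closure ⟨hxa, hxA⟩⟩)
      refine ⟨a, ?_, hxa, hxH⟩
      by_contra hc
      push_neg at hc
      exact (hθempty ▸ hmono a θ hc hxa : x ∈ (∅ : Set X))
    · exact absurd ((hFlim η₀ hl).symm ▸ mem_iInter₂.mpr hη₀min) hη₀mem
  · rintro ⟨η, _, hxF, hxH⟩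
    by_contra hxA
    exact hxH (hH η ▸ subset_closure ⟨hxF, hxA⟩)
end

section
/- Let X be a Polish space and A ⊆ X a Δ⁰₂ set. Let F_η, H_η be the transfinite sequences defined by the difference-hierarchy recursion: F_0 = X, H_η = closure(F_η \ A), F_{η+1} = H_η ∩ closure(F_η ∩ A), F_λ = ⋂_{η<λ} F_η at limit ordinals λ, and let θ < ω₁ be an ordinal with F_θ = ∅. For each η < θ let P_η and Q_η be perfect sets such that F_η △ P_η and H_η △ Q_η are countable (the perfect kernels of F_η and H_η). Then the symmetric difference A △ ⋃_{η<θ} (P_η \ Q_η) is countable. -/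
open Set

/-- Let `A` be a Δ⁰₂ set in a Polish space, let `F_η, H_η` be the difference-hierarchy
sequences for `A`, let `θ < ω₁` satisfy `F θ = ∅`, and for `η < θ` let `P_η, Q_η` be
perfect sets with `F_η △ P_η` and `H_η △ Q_η` countable (the perfect kernels). Then
`A △ ⋃_{η<θ} (P_η \ Q_η)` is countable. -/
theorem delta02_symmDiff_perfect_selector_countable
    {X : Type*} [TopologicalSpace X] [PolishSpace X]
    (A : Set X) (hAGδ : IsGδ A) (hAFσ : IsGδ Aᶜ)
    (F H : Ordinal.{0} → Set X)
    (hF0 : F 0 = Set.univ)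
    (hH : ∀ η, H η = closure (F η \ A))
    (hFsucc : ∀ η, F (η + 1) = H η ∩ closure (F η ∩ A))
    (hFlim : ∀ lam : Ordinal, Order.IsSuccLimit lam → F lam = ⋂ η < lam, F η)
    (θ : Ordinal) (hθ : θ < (Cardinal.aleph 1).ord) (hFθ : F θ = ∅)
    (P Q : Ordinal.{0} → Set X)
    (hP : ∀ η < θ, Perfect (P η) ∧ (symmDiff (F η) (P η)).Countable)
    (hQ : ∀ η < θ, Perfect (Q η) ∧ (symmDiff (H η) (Q η)).Countable) :
    (symmDiff A (⋃ η < θ, (P η \ Q η))).Countable := by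
  -- Step 1: A = ⋃ η < θ, F η \ H η
  have hA : A = ⋃ η < θ, (F η \ H η) := by
    ext x
    constructor
    · intro hxA
      have hSx : x ∉ F θ := by rw [hFθ]; exact notMem_empty x
      have hne : {η : Ordinal | x ∉ F η}.Nonempty := ⟨θ, hSx⟩
      obtain ⟨η, hηS, hmin⟩ := Ordinal.lt_wf.has_min _ hne
      have hmem : ∀ ξ < η, x ∈ F ξ := fun ξ hξ => by
        by_contra h; exact hmin ξ h hξ
      have hηθ : η ≤ θ := not_lt.mp (fun h => hmin θ hSx h)
      rcases Ordinal.zero_or_succ_or_isSuccLimit η with h0 | ⟨a, ha⟩ | hlim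
      · subst h0
        exact absurd (by rw [hF0]; trivial : x ∈ F 0) hηS
      · have ha' : η = a + 1 := by rw [← ha, Order.succ_eq_add_one]
        have hxFa : x ∈ F a := hmem a (by rw [ha']; exact Order.lt_add_one_iff.mpr le_rfl)
        have hxcl : x ∈ closure (F a ∩ A) := subset_closure ⟨hxFa, hxA⟩
        have hηS' : x ∉ F (a + 1) := ha' ▸ hηS
        have hxH : x ∉ H a := fun h => by
          rw [hFsucc a] at hηS'
          exact hηS' ⟨h, hxcl⟩
        have haθ : a < θ := lt_of_lt_of_le (by rw [ha']; exact Order.lt_add_one_iff.mpr le_rfl) hηθ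
        exact mem_iUnion₂.mpr ⟨a, haθ, hxFa, hxH⟩
      · exfalso
        apply hηS
        rw [hFlim η hlim]
        exact mem_iInter₂.mpr fun ξ hξ => hmem ξ hξ
    · intro hx
      obtain ⟨η, hηθ, hxF, hxH⟩ := mem_iUnion₂.mp hx
      by_contra hxA
      exact hxH (by rw [hH η]; exact subset_closure ⟨hxF, hxA⟩)
  -- Step 2: Iio θ is countable
  have hIio : (Set.Iio θ).Countable := by
    rw [Cardinal.countable_iff_lt_aleph_one, Ordinal.mk_Iio_ordinal]
    exact Cardinal.lift_lt_aleph_one.mpr (Cardinal.lt_ord.mp hθ)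
  -- Step 3: bound the symmetric difference
  have hsub : symmDiff A (⋃ η < θ, (P η \ Q η)) ⊆
      ⋃ η ∈ Set.Iio θ, (symmDiff (F η) (P η) ∪ symmDiff (H η) (Q η)) := by
    rw [hA]
    intro x hx
    simp only [symmDiff_def, sup_eq_union, mem_union, mem_diff, mem_iUnion, mem_Iio,
      exists_prop] at hx ⊢
    rcases hx with ⟨⟨η, hηθ, hxF, hxH⟩, hnot⟩ | ⟨⟨η, hηθ, hxP, hxQ⟩, hnot⟩
    · push_neg at hnot
      by_cases hxP : x ∈ P η
      · exact ⟨η, hηθ, Or.inr (Or.inr ⟨hnot η hηθ hxP, hxH⟩)⟩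
      · exact ⟨η, hηθ, Or.inl (Or.inl ⟨hxF, hxP⟩)⟩
    · push_neg at hnot
      by_cases hxF : x ∈ F η
      · exact ⟨η, hηθ, Or.inr (Or.inl ⟨hnot η hηθ hxF, hxQ⟩)⟩
      · exact ⟨η, hηθ, Or.inl (Or.inr ⟨hxP, hxF⟩)⟩
  exact (Set.Countable.biUnion hIio fun η hη =>
    ((hP η hη).2.union (hQ η hη).2)).mono hsub
end
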